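/- arXiv:1805.02762 — 2 statements merged into one kernel-verified Lean document; each statement's English description precedes it below -/
import Mathlib

section
/- For the directed-ring dynamics β̇ᵢ = δ(β_{i+1 mod n} - βᵢ) with δ > 0 and ∑ᵢ βᵢ(0) = 2π, every component βᵢ(t) converges to 2π/n as t → ∞. -/
open Finset Filter Real

open Finset

open Fin.NatCast

lemma ring_tel {n : ℕ} [NeZero n] (e : Fin n → ℝ) (j : Fin n) (m : ℕ) :
    e (j + (m : Fin n)) - e j = ∑ k ∈ range m, (e ((j + (k : Fin n)) + 1) - e (j + (k : Fin n))) := by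
  induction m with
  | zero => simp
  | succ m ih =>
    rw [Finset.sum_range_succ, ← ih,
      show ((m+1:ℕ):Fin n) = (m:Fin n)+1 from by push_cast; ring, ← add_assoc]
    ring

lemma ring_gap {n : ℕ} [NeZero n] (e : Fin n → ℝ) (h : ∑ i, e i = 0) :
    ∑ i, e i ^ 2 ≤ (n:ℝ)^2 * ∑ i, (e (i+1) - e i)^2 := by
  set d : Fin n → ℝ := fun i => e (i+1) - e i with hd
  set T : ℝ := ∑ i, |d i| with hT
  have hTnn : 0 ≤ T := Finset.sum_nonneg fun i _ => abs_nonneg _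
  have bnd : ∀ i j : Fin n, |e i - e j| ≤ T := by
    intro i j
    have hi : i = j + ((i - j).val : Fin n) := by
      rw [Fin.cast_val_eq_self]; abel
    rw [hi, ring_tel e j ((i-j).val)]
    calc |∑ k ∈ range (i-j).val, d (j + (k:Fin n))|
        ≤ ∑ k ∈ range (i-j).val, |d (j + (k:Fin n))| := Finset.abs_sum_le_sum_abs _ _
      _ ≤ ∑ k ∈ range n, |d (j + (k:Fin n))| := by
          apply Finset.sum_le_sum_of_subset_of_nonneg
          · exact Finset.range_subset_range.2 (le_of_lt (i-j).isLt)
          · intro k _ _; exact abs_nonneg _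
      _ = ∑ k : Fin n, |d (j + k)| := by
          rw [← Fin.sum_univ_eq_sum_range (fun k => |d (j + (k:Fin n))|)]
          exact Finset.sum_congr rfl fun k _ => by rw [Fin.cast_val_eq_self]
      _ = T := Fintype.sum_equiv (Equiv.addLeft j) _ _ (fun k => rfl)
  have each : ∀ i, |e i| ≤ T := by
    intro i
    have h1 : (n:ℝ) * e i = ∑ j, (e i - e j) := by
      rw [Finset.sum_sub_distrib, h, sub_zero, Finset.sum_const, Finset.card_univ,
        Fintype.card_fin, nsmul_eq_mul]
    have h2 : |(n:ℝ) * e i| ≤ (n:ℝ) * T := by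
      rw [h1]
      calc |∑ j, (e i - e j)| ≤ ∑ j : Fin n, |e i - e j| := Finset.abs_sum_le_sum_abs _ _
        _ ≤ ∑ _j : Fin n, T := Finset.sum_le_sum fun j _ => bnd i j
        _ = (n:ℝ) * T := by simp [mul_comm]
    have hn0 : (0:ℝ) < n := by
      have := NeZero.pos n; exact_mod_cast this
    rw [abs_mul, abs_of_pos hn0] at h2
    exact le_of_mul_le_mul_left h2 hn0
  have hT2 : T^2 ≤ (n:ℝ) * ∑ i, d i ^ 2 := by
    have := sq_sum_le_card_mul_sum_sq (s := (Finset.univ : Finset (Fin n))) (f := fun i => |d i|)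
    simpa [sq_abs] using this
  calc ∑ i, e i ^ 2 ≤ ∑ _i : Fin n, T^2 := by
        apply Finset.sum_le_sum
        intro i _
        rw [← sq_abs]
        exact pow_le_pow_left₀ (abs_nonneg _) (each i) 2
    _ = (n:ℝ) * T^2 := by simp [mul_comm]
    _ ≤ (n:ℝ) * ((n:ℝ) * ∑ i, d i ^2) := by
        apply mul_le_mul_of_nonneg_left hT2 (by positivity)
    _ = (n:ℝ)^2 * ∑ i, d i ^ 2 := by ring


theorem ring_system_consensus
    (n : ℕ) (hn : 2 ≤ n) (δ : ℝ) (hδ : 0 < δ)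
    (β : ℝ → Fin n → ℝ)
    (hode : ∀ (i : Fin n) (t : ℝ),
      HasDerivAt (fun s => β s i)
        (δ * (β t ⟨(i.val + 1) % n, Nat.mod_lt _ (by omega)⟩ - β t i)) t)
    (hsum : ∑ i, β 0 i = 2 * Real.pi) :
    ∀ i : Fin n, Filter.Tendsto (fun t => β t i) Filter.atTop
      (nhds (2 * Real.pi / n)) := by
  haveI : NeZero n := ⟨by omega⟩
  have hn0 : (0:ℝ) < n := by exact_mod_cast (by omega : 0 < n)
  set c₀ : ℝ := 2 * Real.pi / n with hc₀
  have hsucc : ∀ i : Fin n,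
      (⟨(i.val + 1) % n, Nat.mod_lt _ (by omega)⟩ : Fin n) = i + 1 := by
    intro i
    ext
    simp [Fin.add_def, Nat.mod_eq_of_lt (show 1 < n by omega)]
  have hode' : ∀ (i : Fin n) (t : ℝ),
      HasDerivAt (fun s => β s i) (δ * (β t (i+1) - β t i)) t := by
    intro i t; have h := hode i t; rwa [hsucc] at h
  have hshift : ∀ f : Fin n → ℝ, ∑ i, f (i+1) = ∑ i, f i :=
    fun f => Fintype.sum_equiv (Equiv.addRight 1) _ _ (fun i => rfl)
  -- sum is conserved
  have hS : ∀ t, ∑ i, β t i = 2 * Real.pi := by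
    have hd : ∀ t, HasDerivAt (fun s => ∑ i, β s i) 0 t := by
      intro t
      have h := HasDerivAt.sum (fun (i : Fin n) (_ : i ∈ Finset.univ) => hode' i t)
      have hz : ∑ i : Fin n, δ * (β t (i+1) - β t i) = 0 := by
        simp only [mul_sub, Finset.sum_sub_distrib, ← Finset.mul_sum, hshift (β t)]
        ring
      rwa [hz, Finset.sum_fn] at h
    intro t
    have := is_const_of_deriv_eq_zero (f := fun s => ∑ i, β s i)
      (fun x => (hd x).differentiableAt) (fun x => (hd x).deriv) t 0
    simpa [hsum] using this
  set e : ℝ → Fin n → ℝ := fun t i => β t i - c₀ with he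
  have hesum : ∀ t, ∑ i, e t i = 0 := by
    intro t
    simp only [he, Finset.sum_sub_distrib, hS t, Finset.sum_const, Finset.card_univ,
      Fintype.card_fin, nsmul_eq_mul, hc₀]
    field_simp
    ring
  set V : ℝ → ℝ := fun t => ∑ i, e t i ^ 2 with hV
  set D : ℝ → ℝ := fun t => ∑ i, (e t (i+1) - e t i) ^ 2 with hD
  have hVnn : ∀ t, 0 ≤ V t := fun t => Finset.sum_nonneg fun i _ => sq_nonneg _
  have hDnn : ∀ t, 0 ≤ D t := fun t => Finset.sum_nonneg fun i _ => sq_nonneg _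
  have hVd : ∀ t, HasDerivAt V (-δ * D t) t := by
    intro t
    have hterm : ∀ i : Fin n, HasDerivAt (fun s => e s i ^ 2)
        (2 * e t i ^ 1 * (δ * (β t (i+1) - β t i))) t :=
      fun i => ((hode' i t).sub_const c₀).pow 2
    have h := HasDerivAt.sum (fun (i : Fin n) (_ : i ∈ Finset.univ) => hterm i)
    have key : ∑ i : Fin n, 2 * e t i ^ 1 * (δ * (β t (i+1) - β t i)) = -δ * D t := by
      have hiter : ∀ i : Fin n, 2 * e t i ^ 1 * (δ * (β t (i+1) - β t i))
          + δ * (e t (i+1) - e t i)^2 = δ * (e t (i+1) ^ 2 - e t i ^ 2) := by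
        intro i; simp only [he]; ring
      have hzero : ∑ i : Fin n, (2 * e t i ^ 1 * (δ * (β t (i+1) - β t i))
          + δ * (e t (i+1) - e t i)^2) = 0 := by
        rw [Finset.sum_congr rfl (fun i _ => hiter i)]
        simp only [mul_sub, Finset.sum_sub_distrib, ← Finset.mul_sum,
          hshift (fun i => e t i ^ 2)]
        ring
      rw [Finset.sum_add_distrib, ← Finset.mul_sum] at hzero
      simp only [hD]
      linarith
    rwa [key, Finset.sum_fn] at h
  -- Gronwall
  set cst : ℝ := δ / n^2 with hcst
  have hcst0 : 0 < cst := by positivity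
  have hgap : ∀ t, V t ≤ (n:ℝ)^2 * D t := fun t => ring_gap (e t) (hesum t)
  set g : ℝ → ℝ := fun t => V t * Real.exp (cst * t) with hg
  have hgd : ∀ t, HasDerivAt g
      ((-δ * D t) * Real.exp (cst * t) + V t * (Real.exp (cst * t) * (cst * 1))) t := by
    intro t
    exact (hVd t).mul ((Real.hasDerivAt_exp (cst*t)).comp t ((hasDerivAt_id t).const_mul cst))
  have hanti : Antitone g := by
    apply antitone_of_deriv_nonpos (fun x => (hgd x).differentiableAt)
    intro x
    rw [(hgd x).deriv]
    have h1 : cst * V x ≤ δ * D x := by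
      have := hgap x
      calc cst * V x ≤ cst * ((n:ℝ)^2 * D x) :=
            mul_le_mul_of_nonneg_left this (le_of_lt hcst0)
        _ = δ * D x := by rw [hcst]; field_simp
    have hexp : 0 < Real.exp (cst * x) := Real.exp_pos _
    nlinarith [hexp]
  have hub : ∀ t ≥ (0:ℝ), V t ≤ V 0 * Real.exp (-(cst * t)) := by
    intro t ht
    have := hanti ht
    simp only [hg, mul_zero, Real.exp_zero, mul_one] at this
    rw [Real.exp_neg, ← div_eq_mul_inv, le_div_iff₀ (Real.exp_pos _)]
    exact this
  have hVlim : Tendsto V atTop (nhds 0) := by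
    have hupper : Tendsto (fun t => V 0 * Real.exp (-(cst * t))) atTop (nhds 0) := by
      have h1 : Tendsto (fun t : ℝ => cst * t) atTop atTop :=
        Tendsto.const_mul_atTop hcst0 tendsto_id
      have h2 := Real.tendsto_exp_neg_atTop_nhds_zero.comp h1
      have h3 := h2.const_mul (V 0)
      simpa using h3
    apply tendsto_of_tendsto_of_tendsto_of_le_of_le' tendsto_const_nhds hupper
    · exact Filter.Eventually.of_forall hVnn
    · exact Filter.eventually_atTop.2 ⟨0, hub⟩
  intro i
  have hsq : Tendsto (fun t => (e t i)^2) atTop (nhds 0) := by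
    apply tendsto_of_tendsto_of_tendsto_of_le_of_le' tendsto_const_nhds hVlim
    · exact Filter.Eventually.of_forall (fun t => sq_nonneg _)
    · exact Filter.Eventually.of_forall (fun t =>
        Finset.single_le_sum (fun j _ => sq_nonneg (e t j)) (Finset.mem_univ i))
  have habs : Tendsto (fun t => |e t i|) atTop (nhds 0) := by
    have := hsq.sqrt
    simpa [Real.sqrt_sq_eq_abs] using this
  rw [show nhds (2 * Real.pi / n) = nhds c₀ from rfl]
  rw [tendsto_iff_norm_sub_tendsto_zero]
  simpa [Real.norm_eq_abs, he] using habs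
end

section
/- With control u = ċ̂ + (D̂ - r̂ - ṙ̂)ψ + βD̂ Eψ, where ψ = (ĉ - p)/D̂, D̂ = ‖ĉ - p‖ > 0, and E the rotation by -π/2, the function W = D̂ - r̂ satisfies Ẇ = -W along trajectories ṗ = u (taking δ = 1). -/
theorem control_law_W_dynamics
    (p chat : ℝ → EuclideanSpace ℝ (Fin 2)) (rhat : ℝ → ℝ) (β : ℝ)
    (hchat : Differentiable ℝ chat) (hrhat : Differentiable ℝ rhat)
    (hDpos : ∀ t, 0 < ‖chat t - p t‖)
    (ψ : ℝ → EuclideanSpace ℝ (Fin 2))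
    (hψ : ∀ t, ψ t = ‖chat t - p t‖⁻¹ • (chat t - p t))
    (Eψ : ℝ → EuclideanSpace ℝ (Fin 2))
    (hE0 : ∀ t, Eψ t 0 = ψ t 1) (hE1 : ∀ t, Eψ t 1 = -(ψ t 0))
    (hp : ∀ t, HasDerivAt p
      (deriv chat t + (‖chat t - p t‖ - rhat t - deriv rhat t) • ψ t
        + (β * ‖chat t - p t‖) • Eψ t) t) :
    ∀ t, HasDerivAt (fun s => ‖chat s - p s‖ - rhat s)
      (-(‖chat t - p t‖ - rhat t)) t := by
  intro t
  set D := ‖chat t - p t‖ with hD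
  have hDpos' : 0 < D := hDpos t
  set a : ℝ := D - rhat t - deriv rhat t with ha
  set f : ℝ → EuclideanSpace ℝ (Fin 2) := fun s => chat s - p s with hf
  have hv : HasDerivAt f (-(a • ψ t + (β * D) • Eψ t)) t := by
    have h1 : HasDerivAt f (deriv chat t -
        (deriv chat t + a • ψ t + (β * D) • Eψ t)) t :=
      ((hchat t).hasDerivAt).sub (hp t)
    convert h1 using 1
    abel
  set v : EuclideanSpace ℝ (Fin 2) := -(a • ψ t + (β * D) • Eψ t) with hvdef
  -- inner product ⟪f t, v⟫ = -(a * D)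
  have hinner : (inner ℝ (f t) v : ℝ) = -(a * D) := by
    have hψψ : ψ t = D⁻¹ • (chat t - p t) := hψ t
    have hiψ : (inner ℝ (f t) (ψ t) : ℝ) = D := by
      rw [hψψ, real_inner_smul_right, real_inner_self_eq_norm_sq]
      field_simp [hf]
      ring
    have hiE : (inner ℝ (f t) (Eψ t) : ℝ) = 0 := by
      have : (inner ℝ (f t) (Eψ t) : ℝ) = f t 0 * Eψ t 0 + f t 1 * Eψ t 1 := by
        simp [PiLp.inner_apply, Fin.sum_univ_two, RCLike.inner_apply, mul_comm]
      rw [this, hE0, hE1]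
      have h0 : ψ t 0 = D⁻¹ * (f t 0) := by rw [hψ t]; rfl
      have h1 : ψ t 1 = D⁻¹ * (f t 1) := by rw [hψ t]; rfl
      rw [h0, h1]; ring
    rw [hvdef, inner_neg_right, inner_add_right, real_inner_smul_right,
      real_inner_smul_right, hiψ, hiE]
    ring
  -- derivative of ‖f‖
  have hsq : HasDerivAt (fun s => ‖f s‖ ^ 2) (2 * inner ℝ (f t) v) t := hv.norm_sq
  have hDsq : ‖f t‖ ^ 2 ≠ 0 := by positivity
  have hsqrt : HasDerivAt (fun s => Real.sqrt (‖f s‖ ^ 2))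
      ((2 * inner ℝ (f t) v) / (2 * Real.sqrt (‖f t‖ ^ 2))) t := hsq.sqrt hDsq
  have heq : (fun s => Real.sqrt (‖f s‖ ^ 2)) = fun s => ‖f s‖ := by
    funext s; exact Real.sqrt_sq (norm_nonneg _)
  rw [heq] at hsqrt
  have hval : (2 * (inner ℝ (f t) v : ℝ)) / (2 * Real.sqrt (‖f t‖ ^ 2)) = -a := by
    rw [Real.sqrt_sq (norm_nonneg _), hinner]
    have : ‖f t‖ = D := rfl
    rw [this]
    field_simp
  rw [hval] at hsqrt
  have := hsqrt.sub (hrhat t).hasDerivAt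
  convert this using 1
  case e'_4 => rfl
  case e'_5 => rfl
  case e'_8 => rfl
  rw [ha]
  ring
end
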